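/- Let R be the ring of (n+1)×(n+1) matrices over F_q whose last row is zero. A left ideal L of R is maximal if and only if |L| = q^{n²}. -/

import Mathlib

/-- Left ideal of a (not necessarily unital) ring, as a set. -/
def IsLeftIdeal {R : Type*} [NonUnitalRing R] (L : Set R) : Prop :=
  0 ∈ L ∧ (∀ a ∈ L, ∀ b ∈ L, a + b ∈ L) ∧ (∀ a ∈ L, -a ∈ L) ∧
    ∀ (r : R), ∀ a ∈ L, r * a ∈ L

/-- Maximal left ideal: a proper left ideal not properly contained in any
proper left ideal. -/
def IsMaximalLeftIdeal {R : Type*} [NonUnitalRing R] (M : Set R) : Prop :=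
  IsLeftIdeal M ∧ M ≠ Set.univ ∧
    ∀ L : Set R, IsLeftIdeal L → M ⊂ L → L = Set.univ

/-- The ring of `(n+1) × (n+1)` matrices over `F` whose last row is zero. -/
def lastRowZero (n : ℕ) (F : Type*) [Field F] :
    NonUnitalSubring (Matrix (Fin (n + 1)) (Fin (n + 1)) F) where
  carrier := {M | ∀ j, M (Fin.last n) j = 0}
  zero_mem' := by intro j; simp
  add_mem' := by intro a b ha hb j; simp [Matrix.add_apply, ha j, hb j]
  neg_mem' := by intro a ha j; simp [Matrix.neg_apply, ha j]
  mul_mem' := by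
    intro a b ha hb j
    simp only [Set.mem_setOf_eq] at ha ⊢
    simp [Matrix.mul_apply, ha]

namespace MaxAux

variable {F : Type*} [Field F] {n : ℕ}

/-- The matrix with row `i` equal to `v` and all other rows zero. -/
def rowMat (i : Fin (n+1)) (v : Fin (n+1) → F) : Matrix (Fin (n+1)) (Fin (n+1)) F :=
  Matrix.of fun i' j => if i' = i then v j else 0

@[simp] lemma rowMat_apply (i : Fin (n+1)) (v : Fin (n+1) → F) (i' j : Fin (n+1)) :
    rowMat i v i' j = if i' = i then v j else 0 := rfl

lemma rowMat_mem {i : Fin (n+1)} (hi : i ≠ Fin.last n) (v : Fin (n+1) → F) :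
    rowMat i v ∈ lastRowZero n F := by
  intro j
  exact if_neg fun h => hi h.symm

/-- Element of the ring with row `i.castSucc` equal to `v`. -/
def rmE (i : Fin n) (v : Fin (n+1) → F) : ↥(lastRowZero n F) :=
  ⟨rowMat i.castSucc v, rowMat_mem (Fin.castSucc_lt_last i).ne v⟩

lemma rmE_row_self (i : Fin n) (v : Fin (n+1) → F) :
    ((rmE i v : ↥(lastRowZero n F)) : Matrix (Fin (n+1)) (Fin (n+1)) F) i.castSucc = v :=
  funext fun _ => if_pos rfl

lemma rmE_row_ne (i : Fin n) (v : Fin (n+1) → F) {j : Fin (n+1)} (h : j ≠ i.castSucc) :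
    ((rmE i v : ↥(lastRowZero n F)) : Matrix (Fin (n+1)) (Fin (n+1)) F) j = 0 :=
  funext fun _ => if_neg h

lemma rowMat_single_mul (i j : Fin (n+1)) (c : F) (M : Matrix (Fin (n+1)) (Fin (n+1)) F) :
    rowMat i (Pi.single j c) * M = rowMat i (c • M j) := by
  ext i' j'
  by_cases h : i' = i <;>
    simp [Matrix.mul_apply, h, Pi.single_apply, ite_mul]

lemma rmE_mul (i : Fin n) (j : Fin (n+1)) (c : F) (a : ↥(lastRowZero n F)) :
    rmE i (Pi.single j c) * a = rmE i (c • (a : Matrix (Fin (n+1)) (Fin (n+1)) F) j) := by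
  apply Subtype.ext
  show (rowMat i.castSucc (Pi.single j c)) * (a : Matrix (Fin (n+1)) (Fin (n+1)) F) = _
  exact rowMat_single_mul _ _ _ _

lemma rmE_zero (i : Fin n) : rmE (F := F) i 0 = 0 := by
  apply Subtype.ext
  ext i' j'
  simp [rmE]

lemma rmE_add (i : Fin n) (v w : Fin (n+1) → F) : rmE i (v + w) = rmE i v + rmE i w := by
  apply Subtype.ext
  ext i' j'
  by_cases h : i' = i.castSucc <;> simp [rmE, h]

variable (hn : 0 < n)

/-- The subspace of `F^(n+1)` corresponding to a left ideal `L`. -/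
def Wsub (L : Set ↥(lastRowZero n F)) (hL : IsLeftIdeal L) :
    Submodule F (Fin (n+1) → F) where
  carrier := {v | rmE ⟨0, hn⟩ v ∈ L}
  zero_mem' := by
    show rmE (⟨0, hn⟩ : Fin n) (0 : Fin (n+1) → F) ∈ L
    rw [rmE_zero]; exact hL.1
  add_mem' := by
    intro v w hv hw
    show rmE (⟨0, hn⟩ : Fin n) (v + w) ∈ L
    rw [rmE_add]; exact hL.2.1 _ hv _ hw
  smul_mem' := by
    intro c v hv
    show rmE (⟨0, hn⟩ : Fin n) (c • v) ∈ L
    have h1 : rmE (⟨0, hn⟩ : Fin n) (c • v)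
        = rmE ⟨0, hn⟩ (Pi.single ((⟨0, hn⟩ : Fin n).castSucc) c) * rmE ⟨0, hn⟩ v := by
      rw [rmE_mul, rmE_row_self]
    rw [h1]; exact hL.2.2.2 _ _ hv

lemma mem_Wsub {L : Set ↥(lastRowZero n F)} {hL : IsLeftIdeal L} {v : Fin (n+1) → F} :
    v ∈ Wsub hn L hL ↔ rmE ⟨0, hn⟩ v ∈ L := Iff.rfl

lemma row_mem {L : Set ↥(lastRowZero n F)} (hL : IsLeftIdeal L) {a : ↥(lastRowZero n F)}
    (ha : a ∈ L) (j : Fin (n+1)) :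
    ((a : Matrix (Fin (n+1)) (Fin (n+1)) F) j) ∈ Wsub hn L hL := by
  rw [mem_Wsub]
  have h1 : rmE (⟨0, hn⟩ : Fin n) ((a : Matrix (Fin (n+1)) (Fin (n+1)) F) j)
      = rmE ⟨0, hn⟩ (Pi.single j 1) * a := by
    rw [rmE_mul, one_smul]
  rw [h1]; exact hL.2.2.2 _ _ ha

lemma coe_mul_row (r a : ↥(lastRowZero n F)) (j : Fin (n+1)) :
    ((r * a : ↥(lastRowZero n F)) : Matrix (Fin (n+1)) (Fin (n+1)) F) j
      = ∑ k, (r : Matrix (Fin (n+1)) (Fin (n+1)) F) j k •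
          (a : Matrix (Fin (n+1)) (Fin (n+1)) F) k := by
  funext j'
  simp [Matrix.mul_apply, Finset.sum_apply]

lemma isLeftIdeal_setOf (W : Submodule F (Fin (n+1) → F)) :
    IsLeftIdeal {a : ↥(lastRowZero n F) |
        ∀ j, (a : Matrix (Fin (n+1)) (Fin (n+1)) F) j ∈ W} := by
  refine ⟨fun j => ?_, fun a ha b hb j => ?_, fun a ha j => ?_, fun r a ha j => ?_⟩
  · show ((0 : ↥(lastRowZero n F)) : Matrix (Fin (n+1)) (Fin (n+1)) F) j ∈ W
    simp only [ZeroMemClass.coe_zero, Matrix.zero_apply]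
    exact W.zero_mem
  · show ((a + b : ↥(lastRowZero n F)) : Matrix (Fin (n+1)) (Fin (n+1)) F) j ∈ W
    push_cast
    exact W.add_mem (ha j) (hb j)
  · show ((-a : ↥(lastRowZero n F)) : Matrix (Fin (n+1)) (Fin (n+1)) F) j ∈ W
    push_cast
    exact W.neg_mem (ha j)
  · show ((r * a : ↥(lastRowZero n F)) : Matrix (Fin (n+1)) (Fin (n+1)) F) j ∈ W
    rw [coe_mul_row]
    exact Submodule.sum_mem _ fun k _ => W.smul_mem _ (ha k)

lemma sum_mem_ideal {L : Set ↥(lastRowZero n F)} (hL : IsLeftIdeal L) {ι : Type*}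
    (s : Finset ι) (f : ι → ↥(lastRowZero n F)) (h : ∀ i ∈ s, f i ∈ L) :
    (∑ i ∈ s, f i) ∈ L := by
  classical
  induction s using Finset.induction_on with
  | empty => simpa using hL.1
  | insert _ _ hns ih =>
    rw [Finset.sum_insert hns]
    exact hL.2.1 _ (h _ (Finset.mem_insert_self _ _)) _
      (ih fun i hi => h i (Finset.mem_insert_of_mem hi))

lemma eq_sum_rmE (a : ↥(lastRowZero n F)) :
    a = ∑ i : Fin n, rmE i ((a : Matrix (Fin (n+1)) (Fin (n+1)) F) i.castSucc) := by
  apply Subtype.ext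
  rw [AddSubmonoidClass.coe_finset_sum]
  ext i' j'
  rw [Matrix.sum_apply]
  by_cases h : i' = Fin.last n
  · have h0 : ∀ i : Fin n, ((rmE i ((a : Matrix (Fin (n+1)) (Fin (n+1)) F) i.castSucc)
        : ↥(lastRowZero n F)) : Matrix (Fin (n+1)) (Fin (n+1)) F) i' j' = 0 := by
      intro i
      have := rmE_row_ne (F := F) i ((a : Matrix (Fin (n+1)) (Fin (n+1)) F) i.castSucc)
        (j := i') (h ▸ (Fin.castSucc_lt_last i).ne')
      rw [this]; rfl
    rw [Finset.sum_congr rfl fun i _ => h0 i, Finset.sum_const, smul_zero, h]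
    exact a.2 j'
  · rw [Finset.sum_eq_single (i'.castPred h)]
    · rw [show ((i'.castPred h).castSucc) = i' from Fin.castSucc_castPred i' h]
      exact (congrFun (rmE_row_self (i'.castPred h) _) j').symm
    · intro i _ hi
      have hne : i' ≠ i.castSucc := fun hc => hi (by subst hc; exact (Fin.castPred_castSucc).symm)
      rw [rmE_row_ne i _ hne]
      rfl
    · intro hmem; exact absurd (Finset.mem_univ _) hmem

lemma mem_of_rows {L : Set ↥(lastRowZero n F)} (hL : IsLeftIdeal L) {a : ↥(lastRowZero n F)}
    (h : ∀ j, (a : Matrix (Fin (n+1)) (Fin (n+1)) F) j ∈ Wsub hn L hL) : a ∈ L := by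
  rw [eq_sum_rmE a]
  apply sum_mem_ideal hL
  intro i _
  have h1 : rmE i ((a : Matrix (Fin (n+1)) (Fin (n+1)) F) i.castSucc)
      = rmE i (Pi.single ((⟨0, hn⟩ : Fin n).castSucc) 1) *
          rmE ⟨0, hn⟩ ((a : Matrix (Fin (n+1)) (Fin (n+1)) F) i.castSucc) := by
    rw [rmE_mul, rmE_row_self, one_smul]
  rw [h1]
  exact hL.2.2.2 _ _ (h i.castSucc)

lemma L_eq {L : Set ↥(lastRowZero n F)} (hL : IsLeftIdeal L) :
    L = {a : ↥(lastRowZero n F) |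
        ∀ j, (a : Matrix (Fin (n+1)) (Fin (n+1)) F) j ∈ Wsub hn L hL} :=
  Set.ext fun _ => ⟨fun ha j => row_mem hn hL ha j, fun h => mem_of_rows hn hL h⟩

lemma Wsub_setOf (W : Submodule F (Fin (n+1) → F)) :
    Wsub hn {a : ↥(lastRowZero n F) |
        ∀ j, (a : Matrix (Fin (n+1)) (Fin (n+1)) F) j ∈ W} (isLeftIdeal_setOf W) = W := by
  ext v
  rw [mem_Wsub]
  constructor
  · intro hv
    have := hv ((⟨0, hn⟩ : Fin n).castSucc)
    rwa [rmE_row_self] at this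
  · intro hv j
    by_cases h : j = (⟨0, hn⟩ : Fin n).castSucc
    · rw [h, rmE_row_self]; exact hv
    · rw [rmE_row_ne _ _ h]; exact W.zero_mem

/-- The element of the ring with given first `n` rows (last row zero). -/
def ofRows (f : Fin n → (Fin (n+1) → F)) : ↥(lastRowZero n F) :=
  ⟨Matrix.of fun i' j' => if h : i' = Fin.last n then 0 else f (i'.castPred h) j',
    fun j => dif_pos rfl⟩

lemma ofRows_row (f : Fin n → (Fin (n+1) → F)) (i : Fin n) :
    ((ofRows f : ↥(lastRowZero n F)) : Matrix (Fin (n+1)) (Fin (n+1)) F) i.castSucc = f i := by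
  funext j'
  show (if h : i.castSucc = Fin.last n then 0 else f (Fin.castPred _ h) j') = f i j'
  rw [dif_neg (Fin.castSucc_lt_last i).ne, Fin.castPred_castSucc]

/-- A left ideal is equivalent to `n` copies of its row space. -/
noncomputable def idealEquiv {L : Set ↥(lastRowZero n F)} (hL : IsLeftIdeal L) :
    L ≃ (Fin n → (Wsub hn L hL)) where
  toFun a := fun i => ⟨((a : ↥(lastRowZero n F)) : Matrix (Fin (n+1)) (Fin (n+1)) F) i.castSucc,
    row_mem hn hL a.2 i.castSucc⟩
  invFun f := ⟨ofRows (fun i => (f i : Fin (n+1) → F)), by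
    apply mem_of_rows hn hL
    intro j
    by_cases h : j = Fin.last n
    · have : ((ofRows (fun i => (f i : Fin (n+1) → F)) : ↥(lastRowZero n F)) :
          Matrix (Fin (n+1)) (Fin (n+1)) F) j = 0 := by
        funext j'; subst h; exact (ofRows _).2 j'
      rw [this]; exact (Wsub hn L hL).zero_mem
    · have : ((ofRows (fun i => (f i : Fin (n+1) → F)) : ↥(lastRowZero n F)) :
          Matrix (Fin (n+1)) (Fin (n+1)) F) j = (f (j.castPred h) : Fin (n+1) → F) := by
        conv_lhs => rw [show j = (j.castPred h).castSucc from (Fin.castSucc_castPred j h).symm]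
        exact ofRows_row _ _
      rw [this]; exact (f (j.castPred h)).2⟩
  left_inv a := by
    apply Subtype.ext
    apply Subtype.ext
    funext i' j'
    show (if h : i' = Fin.last n then 0
      else ((a : ↥(lastRowZero n F)) : Matrix (Fin (n+1)) (Fin (n+1)) F)
        ((i'.castPred h).castSucc) j') = _
    by_cases h : i' = Fin.last n
    · rw [dif_pos h, h]
      exact ((a : ↥(lastRowZero n F)).2 j').symm
    · rw [dif_neg h, Fin.castSucc_castPred]
  right_inv f := by
    funext i
    apply Subtype.ext
    exact ofRows_row (fun k => ((f k : Fin (n+1) → F))) i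

lemma card_ideal {L : Set ↥(lastRowZero n F)} (hL : IsLeftIdeal L) :
    Nat.card L = Nat.card (Wsub hn L hL) ^ n := by
  rw [Nat.card_congr (idealEquiv hn hL), Nat.card_pi, Finset.prod_const,
    Finset.card_univ, Fintype.card_fin]

lemma L_eq_univ_iff {L : Set ↥(lastRowZero n F)} (hL : IsLeftIdeal L) :
    L = Set.univ ↔ Wsub hn L hL = ⊤ := by
  constructor
  · intro h
    ext v
    simp only [Submodule.mem_top, iff_true]
    rw [mem_Wsub, h]
    trivial
  · intro h
    apply Set.eq_univ_iff_forall.2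
    intro a
    apply mem_of_rows hn hL
    intro j
    rw [h]
    trivial

lemma coatom_of_max {L : Set ↥(lastRowZero n F)} (hL : IsLeftIdeal L)
    (hmax : IsMaximalLeftIdeal L) : IsCoatom (Wsub hn L hL) := by
  constructor
  · intro htop
    exact hmax.2.1 ((L_eq_univ_iff hn hL).2 htop)
  · intro W' hW'
    set L' : Set ↥(lastRowZero n F) :=
      {a : ↥(lastRowZero n F) | ∀ j, (a : Matrix (Fin (n+1)) (Fin (n+1)) F) j ∈ W'} with hL'def
    have hL' : IsLeftIdeal L' := isLeftIdeal_setOf W'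
    have hsub : L ⊆ L' := fun a ha j => hW'.le (row_mem hn hL ha j)
    obtain ⟨v, hvW', hvW⟩ := SetLike.exists_of_lt hW'
    have hvL' : rmE ⟨0, hn⟩ v ∈ L' := by
      intro j
      by_cases h : j = (⟨0, hn⟩ : Fin n).castSucc
      · rw [h, rmE_row_self]; exact hvW'
      · rw [rmE_row_ne _ _ h]; exact W'.zero_mem
    have hvL : rmE ⟨0, hn⟩ v ∉ L := hvW
    have huniv : L' = Set.univ := hmax.2.2 L' hL' ⟨hsub, fun hle => hvL (hle hvL')⟩
    ext v'
    simp only [Submodule.mem_top, iff_true]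
    have : rmE (⟨0, hn⟩ : Fin n) v' ∈ L' := huniv ▸ Set.mem_univ _
    have h2 := this ((⟨0, hn⟩ : Fin n).castSucc)
    rwa [rmE_row_self] at h2

lemma max_of_coatom {L : Set ↥(lastRowZero n F)} (hL : IsLeftIdeal L)
    (hco : IsCoatom (Wsub hn L hL)) : IsMaximalLeftIdeal L := by
  refine ⟨hL, fun h => hco.1 ((L_eq_univ_iff hn hL).1 h), ?_⟩
  intro L' hL' hlt
  have hWle : Wsub hn L hL ≤ Wsub hn L' hL' := fun v hv => hlt.1 hv
  have hWne : Wsub hn L hL ≠ Wsub hn L' hL' := by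
    intro h
    apply hlt.2
    intro a ha
    exact mem_of_rows hn hL (fun j => h ▸ row_mem hn hL' ha j)
  have := hco.2 _ (lt_of_le_of_ne hWle hWne)
  exact (L_eq_univ_iff hn hL').2 this

lemma coatom_iff_finrank (W : Submodule F (Fin (n+1) → F)) :
    IsCoatom W ↔ Module.finrank F W = n := by
  have hV : Module.finrank F (Fin (n+1) → F) = n + 1 := by
    rw [Module.finrank_pi, Fintype.card_fin]
  constructor
  · intro hco
    have hlt : Module.finrank F W < n + 1 := by
      have := Submodule.finrank_lt (K := F) hco.1
      rwa [hV] at this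
    obtain ⟨v, -, hv⟩ := SetLike.exists_of_lt (lt_top_iff_ne_top.2 hco.1)
    have hv0 : v ≠ 0 := fun h => hv (h ▸ W.zero_mem)
    have hlt2 : W < W ⊔ (F ∙ v) := lt_of_le_of_ne le_sup_left
      (fun h => hv (h ▸ Submodule.mem_sup_right (Submodule.mem_span_singleton_self v)))
    have htop := hco.2 _ hlt2
    have hle : Module.finrank F ↥(W ⊔ (F ∙ v)) ≤ Module.finrank F W + 1 := by
      have h1 := Submodule.finrank_sup_add_finrank_inf_eq W (F ∙ v)
      have h2 : Module.finrank F ↥(F ∙ v) = 1 := finrank_span_singleton hv0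
      omega
    rw [htop, finrank_top, hV] at hle
    omega
  · intro hfr
    constructor
    · intro htop
      rw [htop, finrank_top, hV] at hfr
      omega
    · intro W' hW'
      have h1 : Module.finrank F W < Module.finrank F W' :=
        Submodule.finrank_lt_finrank_of_lt hW'
      have h2 : Module.finrank F W' ≤ n + 1 := by
        have := Submodule.finrank_le W'
        rwa [hV] at this
      apply Submodule.eq_top_of_finrank_eq
      omega

end MaxAux

/-- A left ideal of the ring of `(n+1)×(n+1)` matrices over `F_q` with last row
zero is maximal if and only if it has cardinality `q^(n²)`. -/


theorem maximal_iff_card {F : Type*} [Field F] [Fintype F] {n : ℕ} (hn : 1 ≤ n)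
    (L : Set ↥(lastRowZero n F)) (hL : IsLeftIdeal L) :
    IsMaximalLeftIdeal L ↔ L.ncard = Fintype.card F ^ (n ^ 2) := by
  classical
  have hn' : 0 < n := hn
  set W := MaxAux.Wsub hn' L hL with hW
  haveI : Fintype ↥W := Fintype.ofFinite _
  have hcard : L.ncard = Fintype.card F ^ (n * Module.finrank F W) := by
    rw [← Nat.card_coe_set_eq, MaxAux.card_ideal hn' hL, Nat.card_eq_fintype_card,
      Module.card_eq_pow_finrank (K := F) (V := ↥W), ← pow_mul, mul_comm]
  have hq : 1 < Fintype.card F := Fintype.one_lt_card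
  constructor
  · intro hmax
    have hfr : Module.finrank F W = n :=
      (MaxAux.coatom_iff_finrank W).1 (MaxAux.coatom_of_max hn' hL hmax)
    rw [hcard, hfr, ← pow_two]
  · intro hc
    rw [hcard] at hc
    have h1 : n * Module.finrank F W = n ^ 2 :=
      Nat.pow_right_injective hq hc
    have hfr : Module.finrank F W = n := by
      rw [pow_two] at h1
      exact Nat.eq_of_mul_eq_mul_left hn' h1
    exact MaxAux.max_of_coatom hn' hL ((MaxAux.coatom_iff_finrank W).2 hfr)
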